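/- Let k be an even positive integer, c = (c₁, c₂) ∈ ℂ², and let w ∈ ℂ with w ≠ 0 and w² ≠ 1; fix r₁, r₂ ∈ ℂ with r₁² = 1 + w, r₂² = 1 − w and set A₁ := 1/(2r₁) + 1/(2·i·r₂), A₂ := 1/(2r₁) − 1/(2·i·r₂). Let α, β, γ, η ∈ ℂ satisfy α ≠ 0, exp(2η) = 1, αᵏ = −2·exp(η) and exp(αc₁ + βc₂) = −1, and let Φ₁ : ℂ → ℂ satisfy Φ₁(t + c₂) = Φ₁(t) for all t ∈ ℂ. Set ψ(z₁, z₂) := αz₁ + βz₂ + Φ₁(z₂) + γ, and define f(z₁, z₂) := (A₁·exp(ψ(z)) + A₂·exp(−ψ(z)))/(√2·αᵏ) and g(z₁, z₂) := (A₁·exp(−ψ(z) + η) + A₂·exp(ψ(z) − η))/(√2·αᵏ). Then for all z = (z₁, z₂) ∈ ℂ²: (∂ᵏf/∂z₁ᵏ)(z)² + 2w·(∂ᵏf/∂z₁ᵏ)(z)·(g(z₁ + c₁, z₂ + c₂) − g(z)) + (g(z₁ + c₁, z₂ + c₂) − g(z))² = 1 and (∂ᵏg/∂z₁ᵏ)(z)²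 + 2w·(∂ᵏg/∂z₁ᵏ)(z)·(f(z₁ + c₁, z₂ + c₂) − f(z)) + (f(z₁ + c₁, z₂ + c₂) − f(z))² = 1. -/

import Mathlib

theorem aux_exp2 (a b a' b' : ℂ) : ∀ (n : ℕ) (A A' z : ℂ),
    iteratedDeriv n (fun t => A * Complex.exp (a * t + b) + A' * Complex.exp (a' * t + b')) z
      = A * a ^ n * Complex.exp (a * z + b) + A' * a' ^ n * Complex.exp (a' * z + b') := by
  intro n
  induction n with
  | zero => intro A A' z; simp
  | succ n ih =>
    intro A A' z
    rw [iteratedDeriv_succ']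
    have hd : deriv (fun t => A * Complex.exp (a * t + b) + A' * Complex.exp (a' * t + b'))
        = fun t => (A * a) * Complex.exp (a * t + b) + (A' * a') * Complex.exp (a' * t + b') := by
      funext t
      have h0 : HasDerivAt (fun t : ℂ => a * t + b) a t := by
        simpa using ((hasDerivAt_id t).const_mul a).add_const b
      have h0' : HasDerivAt (fun t : ℂ => a' * t + b') a' t := by
        simpa using ((hasDerivAt_id t).const_mul a').add_const b'
      have h1 : HasDerivAt (fun t => A * Complex.exp (a * t + b))
          (A * a * Complex.exp (a * t + b)) t := by
        have := h0.cexp.const_mul A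
        exact this.congr_deriv (by ring)
      have h2 : HasDerivAt (fun t => A' * Complex.exp (a' * t + b'))
          (A' * a' * Complex.exp (a' * t + b')) t := by
        have := h0'.cexp.const_mul A'
        exact this.congr_deriv (by ring)
      exact (h1.add h2).deriv
    rw [hd, ih (A * a) (A' * a') z]
    ring

theorem stmt_14 (k : ℕ) (hk : 1 ≤ k) (hke : Even k) (c₁ c₂ : ℂ) (w r₁ r₂ A₁ A₂ : ℂ)
    (hw : w ≠ 0) (hw2 : w ^ 2 ≠ 1)
    (hr₁ : r₁ ^ 2 = 1 + w) (hr₂ : r₂ ^ 2 = 1 - w)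
    (hA₁ : A₁ = 1 / (2 * r₁) + 1 / (2 * Complex.I * r₂))
    (hA₂ : A₂ = 1 / (2 * r₁) - 1 / (2 * Complex.I * r₂))
    (α β γ η : ℂ) (hα : α ≠ 0)
    (hη : Complex.exp (2 * η) = 1)
    (hαk : α ^ k = -2 * Complex.exp η)
    (hLc : Complex.exp (α * c₁ + β * c₂) = -1)
    (Φ₁ : ℂ → ℂ) (hΦ₁ : ∀ t, Φ₁ (t + c₂) = Φ₁ t)
    (ψ : ℂ → ℂ → ℂ) (hψ : ∀ z₁ z₂, ψ z₁ z₂ = α * z₁ + β * z₂ + Φ₁ z₂ + γ)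
    (f g : ℂ → ℂ → ℂ)
    (hf : ∀ z₁ z₂, f z₁ z₂ = (A₁ * Complex.exp (ψ z₁ z₂)
      + A₂ * Complex.exp (-ψ z₁ z₂)) / ((Real.sqrt 2 : ℂ) * α ^ k))
    (hg : ∀ z₁ z₂, g z₁ z₂ = (A₁ * Complex.exp (-ψ z₁ z₂ + η)
      + A₂ * Complex.exp (ψ z₁ z₂ - η)) / ((Real.sqrt 2 : ℂ) * α ^ k)) :
    ∀ z₁ z₂ : ℂ,
      (iteratedDeriv k (fun t => f t z₂) z₁) ^ 2
          + 2 * w * (iteratedDeriv k (fun t => f t z₂) z₁)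
            * (g (z₁ + c₁) (z₂ + c₂) - g z₁ z₂)
          + (g (z₁ + c₁) (z₂ + c₂) - g z₁ z₂) ^ 2 = 1 ∧
      (iteratedDeriv k (fun t => g t z₂) z₁) ^ 2
          + 2 * w * (iteratedDeriv k (fun t => g t z₂) z₁)
            * (f (z₁ + c₁) (z₂ + c₂) - f z₁ z₂)
          + (f (z₁ + c₁) (z₂ + c₂) - f z₁ z₂) ^ 2 = 1 := by
  intro z₁ z₂
  set s : ℂ := (Real.sqrt 2 : ℂ) with hs_def
  have hs2 : s ^ 2 = 2 := by
    rw [hs_def]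
    norm_cast
    rw [Real.sq_sqrt] <;> norm_num
  have hs0 : s ≠ 0 := by
    intro h
    rw [h] at hs2
    norm_num at hs2
  have hαk0 : α ^ k ≠ 0 := pow_ne_zero k hα
  -- nonvanishing of r₁ r₂ and A identities
  have hr₁0 : r₁ ≠ 0 := by
    intro h; apply hw2
    have h1 : 1 + w = 0 := by rw [← hr₁, h]; ring
    linear_combination (w - 1) * h1
  have hr₂0 : r₂ ≠ 0 := by
    intro h; apply hw2
    have h1 : 1 - w = 0 := by rw [← hr₂, h]; ring
    linear_combination (-w - 1) * h1
  have hs1 : (A₁ + A₂) * r₁ = 1 := by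
    rw [hA₁, hA₂]; field_simp; ring
  have hs2' : (A₁ - A₂) * (Complex.I * r₂) = 1 := by
    rw [hA₁, hA₂]; field_simp [Complex.I_ne_zero]; ring
  have hp' : (A₁ + A₂) ^ 2 * (r₁ ^ 2) = 1 := by
    linear_combination ((A₁ + A₂) * r₁ + 1) * hs1
  rw [hr₁] at hp'
  have hq' : (A₁ - A₂) ^ 2 * (Complex.I ^ 2 * r₂ ^ 2) = 1 := by
    linear_combination ((A₁ - A₂) * (Complex.I * r₂) + 1) * hs2'
  rw [Complex.I_sq, hr₂] at hq'
  have hq : (A₁ - A₂) ^ 2 * (1 - w) = -1 := by linear_combination -hq'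
  have h1 : A₁ ^ 2 + A₂ ^ 2 + 2 * w * A₁ * A₂ = 0 := by linear_combination hp' / 2 + hq / 2
  have h2 : 2 * A₁ * A₂ + w * (A₁ ^ 2 + A₂ ^ 2) = 1 := by linear_combination hp' / 2 - hq / 2
  -- key algebraic identity
  have key : ∀ X Y : ℂ, X * Y = 1 →
      ((A₁ * X + A₂ * Y) / s) ^ 2
        + 2 * w * ((A₁ * X + A₂ * Y) / s) * ((A₁ * Y + A₂ * X) / s)
        + ((A₁ * Y + A₂ * X) / s) ^ 2 = 1 := by
    intro X Y hXY
    have hrw : ((A₁ * X + A₂ * Y) / s) ^ 2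
        + 2 * w * ((A₁ * X + A₂ * Y) / s) * ((A₁ * Y + A₂ * X) / s)
        + ((A₁ * Y + A₂ * X) / s) ^ 2
        = ((A₁ * X + A₂ * Y) ^ 2 + 2 * w * (A₁ * X + A₂ * Y) * (A₁ * Y + A₂ * X)
            + (A₁ * Y + A₂ * X) ^ 2) / s ^ 2 := by ring
    rw [hrw, hs2, div_eq_one_iff_eq (two_ne_zero)]
    linear_combination (X ^ 2 + Y ^ 2) * h1 + 2 * X * Y * h2 + 2 * hXY
  -- notation
  set B : ℂ := β * z₂ + Φ₁ z₂ + γ with hB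
  set E : ℂ := Complex.exp (α * z₁ + B) with hE
  set Q : ℂ := Complex.exp (-(α * z₁ + B)) with hQ
  set eη : ℂ := Complex.exp η with heη
  have heη0 : eη ≠ 0 := Complex.exp_ne_zero η
  have heη2 : eη * eη = 1 := by
    rw [heη, ← Complex.exp_add, ← two_mul, hη]
  have hEQ : E * Q = 1 := by
    rw [hE, hQ, ← Complex.exp_add,
      show α * z₁ + B + -(α * z₁ + B) = 0 from by ring, Complex.exp_zero]
  have hexpnL : Complex.exp (-(α * c₁ + β * c₂)) = -1 := by
    rw [Complex.exp_neg, hLc]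
    norm_num
  have hdeη : Complex.exp (-η) = eη := by
    rw [Complex.exp_neg]
    exact inv_eq_of_mul_eq_one_right heη2
  -- iterated derivative of f
  have hfun : (fun t => f t z₂)
      = fun t => (A₁ / (s * α ^ k)) * Complex.exp (α * t + B)
          + (A₂ / (s * α ^ k)) * Complex.exp ((-α) * t + (-B)) := by
    funext t
    rw [hf, hψ, show α * t + β * z₂ + Φ₁ z₂ + γ = α * t + B from by rw [hB]; ring,
      show -(α * t + B) = (-α) * t + (-B) from by ring]
    ring
  have hfk : iteratedDeriv k (fun t => f t z₂) z₁ = (A₁ * E + A₂ * Q) / s := by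
    rw [hfun, aux_exp2, Even.neg_pow hke,
      show (-α) * z₁ + (-B) = -(α * z₁ + B) from by ring, ← hE, ← hQ]
    field_simp
  -- iterated derivative of g
  have hgun : (fun t => g t z₂)
      = fun t => (A₁ / (s * α ^ k)) * Complex.exp ((-α) * t + (η - B))
          + (A₂ / (s * α ^ k)) * Complex.exp (α * t + (B - η)) := by
    funext t
    rw [hg, hψ, show -(α * t + β * z₂ + Φ₁ z₂ + γ) + η = (-α) * t + (η - B) from by rw [hB]; ring,
      show α * t + β * z₂ + Φ₁ z₂ + γ - η = α * t + (B - η) from by rw [hB]; ring]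
    ring
  have hgk : iteratedDeriv k (fun t => g t z₂) z₁ = (A₁ * (eη * Q) + A₂ * (eη * E)) / s := by
    rw [hgun, aux_exp2, Even.neg_pow hke,
      show (-α) * z₁ + (η - B) = -(α * z₁ + B) + η from by ring,
      show α * z₁ + (B - η) = (α * z₁ + B) + (-η) from by ring,
      Complex.exp_add, Complex.exp_add, hdeη, ← hE, ← hQ, ← heη]
    field_simp
  -- shift identities
  have hψz : ψ z₁ z₂ = α * z₁ + B := by rw [hψ, hB]; ring
  have hψc : ψ (z₁ + c₁) (z₂ + c₂) = (α * z₁ + B) + (α * c₁ + β * c₂) := by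
    rw [hψ, hΦ₁, hB]; ring
  have hgc : g (z₁ + c₁) (z₂ + c₂) = - g z₁ z₂ := by
    rw [hg, hg, hψc, hψz]
    have e1 : Complex.exp (-(α * z₁ + B + (α * c₁ + β * c₂)) + η)
        = - Complex.exp (-(α * z₁ + B) + η) := by
      rw [show -(α * z₁ + B + (α * c₁ + β * c₂)) + η
          = (-(α * z₁ + B) + η) + (-(α * c₁ + β * c₂)) from by ring,
        Complex.exp_add, hexpnL]
      ring
    have e2 : Complex.exp (α * z₁ + B + (α * c₁ + β * c₂) - η)
        = - Complex.exp (α * z₁ + B - η) := by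
      rw [show α * z₁ + B + (α * c₁ + β * c₂) - η
          = (α * z₁ + B - η) + (α * c₁ + β * c₂) from by ring,
        Complex.exp_add, hLc]
      ring
    rw [e1, e2]
    ring
  have hfc : f (z₁ + c₁) (z₂ + c₂) = - f z₁ z₂ := by
    rw [hf, hf, hψc, hψz]
    have e1 : Complex.exp (α * z₁ + B + (α * c₁ + β * c₂))
        = - Complex.exp (α * z₁ + B) := by
      rw [show α * z₁ + B + (α * c₁ + β * c₂)
          = (α * z₁ + B) + (α * c₁ + β * c₂) from rfl, Complex.exp_add, hLc]
      ring
    have e2 : Complex.exp (-(α * z₁ + B + (α * c₁ + β * c₂)))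
        = - Complex.exp (-(α * z₁ + B)) := by
      rw [show -(α * z₁ + B + (α * c₁ + β * c₂))
          = (-(α * z₁ + B)) + (-(α * c₁ + β * c₂)) from by ring,
        Complex.exp_add, hexpnL]
      ring
    rw [e1, e2]
    ring
  have e3 : Complex.exp (-(α * z₁ + B) + η) = Q * eη := by
    rw [Complex.exp_add, ← hQ, ← heη]
  have e4 : Complex.exp (α * z₁ + B - η) = E * eη := by
    rw [show α * z₁ + B - η = (α * z₁ + B) + (-η) from by ring, Complex.exp_add, hdeη, ← hE]
  have hgz : g z₁ z₂ = -((A₁ * Q + A₂ * E) / (2 * s)) := by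
    rw [hg, hψz, hαk, e3, e4]
    field_simp
  have hΔg : g (z₁ + c₁) (z₂ + c₂) - g z₁ z₂ = (A₁ * Q + A₂ * E) / s := by
    rw [hgc, hgz]
    field_simp
    ring
  have hfz : f z₁ z₂ = (A₁ * E + A₂ * Q) / (s * (-2 * eη)) := by
    rw [hf, hψz, hαk, ← hE, ← hQ]
  have hΔf : f (z₁ + c₁) (z₂ + c₂) - f z₁ z₂ = (A₁ * (eη * E) + A₂ * (eη * Q)) / s := by
    rw [hfc, hfz]
    field_simp
    linear_combination (-(A₁ * E + A₂ * Q) * 2) * heη2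
  constructor
  · rw [hfk, hΔg]
    exact key E Q hEQ
  · rw [hgk, hΔf]
    have hXY : (eη * Q) * (eη * E) = 1 := by
      rw [show (eη * Q) * (eη * E) = (eη * eη) * (E * Q) from by ring, heη2, hEQ, mul_one]
    exact key (eη * Q) (eη * E) hXY
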